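/- Under the prolongation rules σₖ,α = ∑_{l=1}^{k+1} (h_α^l / l!) Dˡ ξ_{k+1−l}(x_α, u_α) for the step-size components, the approximate invariance of the step-size equations x_{α+1} − x_α − εh_α = o(ε^r) under the operator X = ∑_{k=0}^r εᵏ Xₖ (with Xₖ acting on x_α by ξₖ(x_α, u_α) and on h_α by σₖ,α) is equivalent to the coefficient identities: for each 1 ≤ i ≤ r, ∑_{l=1}^{i} (h_α^l / l!) Dˡ ξ_{i−l}(x_α, u_α) − σ_{i−1,α} = 0, where the differences ξₖ(x_{α+1}, u_{α+1}) − ξₖ(x_α, u_α) are expanded via ξₖ(x_{α+1}, u_{α+1}) − ξₖ(x_α, u_α) = ∑_{m=1}^{r} ((εh_α)^m / m!) Dᵐ ξₖ(x_α, u_α) + o(ε^r). -/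

import Mathlib

open Filter Finset

lemma poly_shift {N j : ℕ} (hjN : j ≤ N + 1) (a : ℕ → ℝ) (hj : ∀ i < j, a i = 0) (ε : ℝ) :
    ∑ i ∈ Finset.range (N + 1), a i * ε ^ i
      = ε ^ j * ∑ i ∈ Finset.range (N + 1 - j), a (i + j) * ε ^ i := by
  rw [Finset.mul_sum, Finset.range_eq_Ico, ← Finset.sum_Ico_consecutive _ (Nat.zero_le j) hjN]
  have h1 : ∑ i ∈ Finset.Ico 0 j, a i * ε ^ i = 0 :=
    Finset.sum_eq_zero fun i hi => by rw [hj i (Finset.mem_Ico.1 hi).2]; ring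
  rw [h1, zero_add, Finset.sum_Ico_eq_sum_range]
  refine Finset.sum_congr rfl fun i _ => ?_
  rw [add_comm j i, pow_add]; ring

lemma poly_coeff_eq_zero {N r : ℕ} (hrN : r ≤ N) (a : ℕ → ℝ) (h0 : a 0 = 0)
    (ht : Filter.Tendsto (fun ε : ℝ => (∑ i ∈ Finset.range (N + 1), a i * ε ^ i) / ε ^ r)
      (nhdsWithin 0 {0}ᶜ) (nhds 0)) :
    ∀ i ≤ r, a i = 0 := by
  intro i hir
  induction i using Nat.strong_induction_on with
  | _ i ih =>
  match i, hir with
  | 0, _ => exact h0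
  | (j+1), hir =>
    have hall : ∀ i' < j + 1, a i' = 0 := fun i' hi' => ih i' hi' (by omega)
    set F : ℝ → ℝ := fun ε => ∑ i ∈ Finset.range (N + 1 - (j + 1)), a (i + (j + 1)) * ε ^ i
      with hF
    have hshift : ∀ ε : ℝ, (∑ i ∈ Finset.range (N + 1), a i * ε ^ i) = ε ^ (j + 1) * F ε :=
      fun ε => poly_shift (by omega) a hall ε
    have hFcont : Continuous F := by
      apply continuous_finset_sum
      intro i _
      exact (continuous_const).mul (continuous_pow i)
    have hF0 : F 0 = a (j + 1) := by
      show (∑ i ∈ Finset.range (N + 1 - (j + 1)), a (i + (j + 1)) * (0 : ℝ) ^ i) = a (j + 1)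
      rw [Finset.sum_eq_single_of_mem 0 (Finset.mem_range.2 (by omega))
        (fun b _ hb => by simp [zero_pow hb])]
      simp
    have hne : ∀ᶠ ε in nhdsWithin (0 : ℝ) {0}ᶜ, ε ≠ 0 := by
      filter_upwards [self_mem_nhdsWithin] with ε hε using hε
    have h1 : Filter.Tendsto
        (fun ε : ℝ => (∑ i ∈ Finset.range (N + 1), a i * ε ^ i) / ε ^ (j + 1))
        (nhdsWithin 0 {0}ᶜ) (nhds (a (j + 1))) := by
      have hTF : Filter.Tendsto F (nhdsWithin 0 {0}ᶜ) (nhds (a (j + 1))) := by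
        rw [← hF0]
        exact (hFcont.tendsto 0).mono_left nhdsWithin_le_nhds
      refine hTF.congr' ?_
      filter_upwards [hne] with ε hε
      rw [hshift ε, mul_comm, mul_div_assoc, div_self (pow_ne_zero _ hε), mul_one]
    have h2 : Filter.Tendsto
        (fun ε : ℝ => (∑ i ∈ Finset.range (N + 1), a i * ε ^ i) / ε ^ (j + 1))
        (nhdsWithin 0 {0}ᶜ) (nhds 0) := by
      have hpow : Filter.Tendsto (fun ε : ℝ => ε ^ (r - (j + 1)))
          (nhdsWithin 0 {0}ᶜ) (nhds ((0 : ℝ) ^ (r - (j + 1)))) :=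
        ((continuous_pow _).tendsto 0).mono_left nhdsWithin_le_nhds
      have hmul := ht.mul hpow
      rw [zero_mul] at hmul
      refine hmul.congr' ?_
      filter_upwards [hne] with ε hε
      have hsplit : ε ^ r = ε ^ (j + 1) * ε ^ (r - (j + 1)) := by
        rw [← pow_add]; congr 1; omega
      rw [hsplit, ← div_div, div_mul_cancel₀ _ (pow_ne_zero _ hε)]
    exact tendsto_nhds_unique h1 h2

theorem stepsize_prolongation_characterization
    (r : ℕ) (hr : 1 ≤ r) (h : ℝ) (d : ℕ → ℕ → ℝ) (σ : ℕ → ℝ) :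
    Tendsto (fun ε : ℝ =>
        ((∑ k ∈ Finset.range (r + 1), ε ^ k *
            (∑ m ∈ Finset.Icc 1 r, (ε * h) ^ m / (Nat.factorial m : ℝ) * d k m))
          - ∑ k ∈ Finset.Icc 1 r, ε ^ k * σ (k - 1)) / ε ^ r)
      (nhdsWithin 0 {0}ᶜ) (nhds 0)
    ↔
    (∀ i ∈ Finset.Icc 1 r,
      σ (i - 1) = ∑ l ∈ Finset.Icc 1 i, h ^ l / (Nat.factorial l : ℝ) * d (i - l) l) := by
  set N := 2 * r with hN
  set a : ℕ → ℝ := fun i =>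
    (∑ p ∈ ((Finset.range (r + 1)) ×ˢ (Finset.Icc 1 r)).filter (fun p => p.1 + p.2 = i),
      h ^ p.2 / (Nat.factorial p.2 : ℝ) * d p.1 p.2)
    - (if i ∈ Finset.Icc 1 r then σ (i - 1) else 0) with ha
  -- rewriting as a canonical polynomial
  have hfun : ∀ ε : ℝ,
      ((∑ k ∈ Finset.range (r + 1), ε ^ k *
          (∑ m ∈ Finset.Icc 1 r, (ε * h) ^ m / (Nat.factorial m : ℝ) * d k m))
        - ∑ k ∈ Finset.Icc 1 r, ε ^ k * σ (k - 1))
      = ∑ i ∈ Finset.range (N + 1), a i * ε ^ i := by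
    intro ε
    have hmaps : ∀ p ∈ (Finset.range (r + 1)) ×ˢ (Finset.Icc 1 r),
        (fun p : ℕ × ℕ => p.1 + p.2) p ∈ Finset.range (N + 1) := by
      intro p hp
      simp only [Finset.mem_product, Finset.mem_range, Finset.mem_Icc] at hp ⊢
      omega
    have key := Finset.sum_fiberwise_of_maps_to hmaps
      (fun p : ℕ × ℕ => (h ^ p.2 / (Nat.factorial p.2 : ℝ) * d p.1 p.2) * ε ^ (p.1 + p.2))
    have hfirst : (∑ k ∈ Finset.range (r + 1), ε ^ k *
          (∑ m ∈ Finset.Icc 1 r, (ε * h) ^ m / (Nat.factorial m : ℝ) * d k m))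
        = ∑ i ∈ Finset.range (N + 1),
            (∑ p ∈ ((Finset.range (r + 1)) ×ˢ (Finset.Icc 1 r)).filter
                (fun p => p.1 + p.2 = i),
              h ^ p.2 / (Nat.factorial p.2 : ℝ) * d p.1 p.2) * ε ^ i := by
      have hprod : (∑ k ∈ Finset.range (r + 1), ε ^ k *
            (∑ m ∈ Finset.Icc 1 r, (ε * h) ^ m / (Nat.factorial m : ℝ) * d k m))
          = ∑ p ∈ (Finset.range (r + 1)) ×ˢ (Finset.Icc 1 r),
              (h ^ p.2 / (Nat.factorial p.2 : ℝ) * d p.1 p.2) * ε ^ (p.1 + p.2) := by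
        rw [Finset.sum_product]
        refine Finset.sum_congr rfl fun k _ => ?_
        rw [Finset.mul_sum]
        refine Finset.sum_congr rfl fun m _ => ?_
        rw [mul_pow, pow_add]; ring
      rw [hprod, ← key]
      refine Finset.sum_congr rfl fun i _ => ?_
      rw [Finset.sum_mul]
      refine Finset.sum_congr rfl fun p hp => ?_
      rw [(Finset.mem_filter.1 hp).2]
    have hsecond : (∑ k ∈ Finset.Icc 1 r, ε ^ k * σ (k - 1))
        = ∑ i ∈ Finset.range (N + 1),
            (if i ∈ Finset.Icc 1 r then σ (i - 1) else 0) * ε ^ i := by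
      have hsub : Finset.Icc 1 r ⊆ Finset.range (N + 1) := by
        intro x hx
        simp only [Finset.mem_Icc] at hx
        simp only [Finset.mem_range]
        omega
      rw [eq_comm]
      calc ∑ i ∈ Finset.range (N + 1), (if i ∈ Finset.Icc 1 r then σ (i - 1) else 0) * ε ^ i
          = ∑ i ∈ Finset.range (N + 1),
              (if i ∈ Finset.Icc 1 r then σ (i - 1) * ε ^ i else 0) := by
            refine Finset.sum_congr rfl fun i _ => ?_
            split <;> simp
        _ = ∑ i ∈ Finset.range (N + 1) ∩ Finset.Icc 1 r, σ (i - 1) * ε ^ i :=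
            Finset.sum_ite_mem _ _ _
        _ = ∑ i ∈ Finset.Icc 1 r, σ (i - 1) * ε ^ i := by
            rw [Finset.inter_eq_right.2 hsub]
        _ = ∑ k ∈ Finset.Icc 1 r, ε ^ k * σ (k - 1) :=
            Finset.sum_congr rfl fun i _ => mul_comm _ _
    rw [hfirst, hsecond, ← Finset.sum_sub_distrib]
    refine Finset.sum_congr rfl fun i _ => ?_
    simp only [ha]; ring
  have ha0 : a 0 = 0 := by
    simp only [ha]
    have hempty : ((Finset.range (r + 1)) ×ˢ (Finset.Icc 1 r)).filter
        (fun p => p.1 + p.2 = 0) = ∅ := by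
      rw [Finset.filter_eq_empty_iff]
      intro p hp
      simp only [Finset.mem_product, Finset.mem_range, Finset.mem_Icc] at hp
      omega
    rw [hempty]
    simp
  have hfiber : ∀ i ∈ Finset.Icc 1 r,
      (∑ p ∈ ((Finset.range (r + 1)) ×ˢ (Finset.Icc 1 r)).filter (fun p => p.1 + p.2 = i),
        h ^ p.2 / (Nat.factorial p.2 : ℝ) * d p.1 p.2)
      = ∑ l ∈ Finset.Icc 1 i, h ^ l / (Nat.factorial l : ℝ) * d (i - l) l := by
    intro i hi
    simp only [Finset.mem_Icc] at hi
    refine Finset.sum_nbij' (fun p => p.2) (fun l => (i - l, l)) ?_ ?_ ?_ ?_ ?_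
    · intro p hp
      simp only [Finset.mem_filter, Finset.mem_product, Finset.mem_range,
        Finset.mem_Icc] at hp ⊢
      omega
    · intro l hl
      simp only [Finset.mem_Icc] at hl
      simp only [Finset.mem_filter, Finset.mem_product, Finset.mem_range, Finset.mem_Icc]
      omega
    · intro p hp
      simp only [Finset.mem_filter, Finset.mem_product, Finset.mem_range,
        Finset.mem_Icc] at hp
      have : i - p.2 = p.1 := by omega
      simp [Prod.ext_iff, this]
    · intro l hl
      rfl
    · intro p hp
      simp only [Finset.mem_filter, Finset.mem_product, Finset.mem_range,
        Finset.mem_Icc] at hp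
      have : i - p.2 = p.1 := by omega
      rw [this]
  constructor
  · intro ht i hi
    have ht' : Filter.Tendsto
        (fun ε : ℝ => (∑ i ∈ Finset.range (N + 1), a i * ε ^ i) / ε ^ r)
        (nhdsWithin 0 {0}ᶜ) (nhds 0) := by
      refine ht.congr fun ε => ?_
      rw [hfun ε]
    have hi' : i ≤ r := (Finset.mem_Icc.1 hi).2
    have hai := poly_coeff_eq_zero (by omega) a ha0 ht' i hi'
    simp only [ha] at hai
    simp only [hi, if_true] at hai
    rw [hfiber i hi] at hai
    linarith [hai]
  · intro hid
    have haall : ∀ i' < r + 1, a i' = 0 := by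
      intro i' hi'
      match i' with
      | 0 => exact ha0
      | (j+1) =>
        have hmem : (j + 1) ∈ Finset.Icc 1 r := Finset.mem_Icc.2 ⟨by omega, by omega⟩
        simp only [ha, hmem, if_true]
        rw [hfiber _ hmem, ← hid _ hmem]
        ring
    set F : ℝ → ℝ := fun ε =>
      ∑ i ∈ Finset.range (N + 1 - (r + 1)), a (i + (r + 1)) * ε ^ i with hF
    have hshift : ∀ ε : ℝ,
        (∑ i ∈ Finset.range (N + 1), a i * ε ^ i) = ε ^ (r + 1) * F ε :=
      fun ε => poly_shift (by omega) a haall ε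
    have hFcont : Continuous F := by
      apply continuous_finset_sum
      intro i _
      exact (continuous_const).mul (continuous_pow i)
    have hT : Filter.Tendsto (fun ε : ℝ => ε * F ε) (nhdsWithin 0 {0}ᶜ) (nhds 0) := by
      have : Filter.Tendsto (fun ε : ℝ => ε * F ε) (nhds 0) (nhds (0 * F 0)) :=
        (continuous_id.mul hFcont).tendsto 0
      rw [zero_mul] at this
      exact this.mono_left nhdsWithin_le_nhds
    have hne : ∀ᶠ ε in nhdsWithin (0 : ℝ) {0}ᶜ, ε ≠ 0 := by
      filter_upwards [self_mem_nhdsWithin] with ε hε using hε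
    refine hT.congr' ?_
    filter_upwards [hne] with ε hε
    rw [hfun ε, hshift ε, pow_succ, mul_assoc,
      mul_div_cancel_left₀ _ (pow_ne_zero _ hε)]
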